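/- Suppose F_λ = f + λp satisfies: f is L-Lipschitz in y, p obeys the gradient dominance condition max_{y'∈Y}⟨∇_y p(x,y), y - y'⟩ ≥ μ·p(x,y) for some μ>0, and Y is compact with diameter C_u. If (x_λ, y_λ) is a first-order stationary point of F_λ in y (i.e., ⟨∇_y F_λ(x_λ,y_λ), y_λ - y'⟩ ≤ 0 for all y' ∈ Y), then p(x_λ, y_λ) ≤ L·C_u/(λμ). -/

import Mathlib

open RealInnerProductSpace

/-- **Penalty value at a stationary point under gradient dominance.**
If `‖∇_y f‖ ≤ L`, the penalty `p ≥ 0` obeys the gradient dominance condition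
`max_{y'∈Y} ⟨∇_y p(x,y), y - y'⟩ ≥ μ p(x,y)`, `Y` has diameter `C_u`, and
`(xλ, yλ)` is first-order stationary in `y` for `F_λ = f + λ p`, then
`p(xλ, yλ) ≤ L C_u / (λ μ)`. -/
theorem stationary_point_penalty_bound {X E : Type*} [NormedAddCommGroup E]
    [InnerProductSpace ℝ E] [CompleteSpace E]
    (Y : Set E) (hYconv : Convex ℝ Y) (hYcomp : IsCompact Y)
    (f p : X → E → ℝ) (Gf Gp : X → E → E) (L Cu μ lam : ℝ)
    (hL : 0 ≤ L) (hμ : 0 < μ) (hlam : 0 < lam)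
    (hGf : ∀ x y, HasGradientAt (f x) (Gf x y) y)
    (hGp : ∀ x y, HasGradientAt (p x) (Gp x y) y)
    (hGfbound : ∀ x y, ‖Gf x y‖ ≤ L)
    (hppos : ∀ x y, 0 ≤ p x y)
    (hdom : ∀ x, ∀ y ∈ Y, ∃ y' ∈ Y, μ * p x y ≤ ⟪Gp x y, y - y'⟫)
    (hdiam : ∀ y ∈ Y, ∀ y' ∈ Y, ‖y - y'‖ ≤ Cu)
    (xl : X) (yl : E) (hyl : yl ∈ Y)
    (hstat : ∀ y' ∈ Y, ⟪Gf xl yl + lam • Gp xl yl, yl - y'⟫ ≤ 0) :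
    p xl yl ≤ L * Cu / (lam * μ) := by
  obtain ⟨y', hy', hdom'⟩ := hdom xl yl hyl
  have hstat' := hstat y' hy'
  rw [inner_add_left, real_inner_smul_left] at hstat'
  have h1 : lam * (μ * p xl yl) ≤ lam * ⟪Gp xl yl, yl - y'⟫ :=
    mul_le_mul_of_nonneg_left hdom' hlam.le
  have h2 : lam * ⟪Gp xl yl, yl - y'⟫ ≤ -⟪Gf xl yl, yl - y'⟫ := by linarith
  have h3 : -⟪Gf xl yl, yl - y'⟫ ≤ ‖Gf xl yl‖ * ‖yl - y'‖ := by
    have := abs_real_inner_le_norm (Gf xl yl) (yl - y')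
    have := neg_abs_le (⟪Gf xl yl, yl - y'⟫); linarith
  have h4 : ‖Gf xl yl‖ * ‖yl - y'‖ ≤ L * Cu :=
    mul_le_mul (hGfbound xl yl) (hdiam yl hyl y' hy') (norm_nonneg _) hL
  rw [div_eq_inv_mul, ← mul_le_mul_iff_right₀ (show (0:ℝ) < lam * μ by positivity)]
  calc lam * μ * p xl yl = lam * (μ * p xl yl) := by ring
    _ ≤ L * Cu := by linarith
    _ = lam * μ * ((lam * μ)⁻¹ * (L * Cu)) := by field_simp
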